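/- There exists a class S = {σ*} with |S| = 1, X = ℕ, Y = {0,1}, σ*(x) = {0,1} for all x (so the zero-loss objective is trivially achievable with zero samples), such that for every sample size m, taking D uniform on {1,…,2m}: for any estimator π̂ mapping samples to policies, sup over deterministic demonstrators π* ∈ Π_{σ*} of E_{S∼(D×π*)^m} E_{x∼D} D_TV(π*(·|x), π̂(·|x;S)) ≥ 1/4, where Π_{σ*} is the set of policies supported on σ*. -/
import Mathlib

lemma tv_eq (Q : Fin 2 → ℝ) (h0 : 0 ≤ Q 0) (h1 : 0 ≤ Q 1) (hs : Q 0 + Q 1 = 1) (b : Fin 2) :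
    (1/2 : ℝ) * ∑ y : Fin 2, |(if y = b then (1:ℝ) else 0) - Q y| = Q (b + 1) := by
  fin_cases b <;> simp [Fin.sum_univ_two]
  · have e1 : (1:ℝ) - Q 0 = Q 1 := by linarith
    rw [e1, abs_of_nonneg h1]; ring
  · have e1 : (1:ℝ) - Q 1 = Q 0 := by linarith
    rw [e1, abs_of_nonneg h0]; ring

lemma flip_sum {n : ℕ} (x : Fin n) (F : (Fin n → Fin 2) → ℝ)
    (h : ∀ g : Fin n → Fin 2, F g + F (Function.update g x (g x + 1)) = 1) :
    ∑ g : Fin n → Fin 2, F g = 2 ^ n / 2 := by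
  have hb : ∀ b : Fin 2, b + 1 + 1 = b := by decide
  have inv : Function.Involutive (fun g : Fin n → Fin 2 => Function.update g x (g x + 1)) := by
    intro g
    simp only [Function.update_self, Function.update_idem, hb, Function.update_eq_self]
  have h2 : ∑ g : Fin n → Fin 2, F ((inv.toPerm _) g) = ∑ g : Fin n → Fin 2, F g :=
    Equiv.sum_comp _ F
  have h3 : (∑ g : Fin n → Fin 2, F g) + (∑ g : Fin n → Fin 2, F g) = 2 ^ n := by
    nth_rewrite 1 [← h2]
    rw [← Finset.sum_add_distrib]
    have : ∀ g : Fin n → Fin 2, F ((inv.toPerm _) g) + F g = 1 := by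
      intro g
      have := h g
      simp only [Function.Involutive.coe_toPerm]
      linarith
    rw [Finset.sum_congr rfl (fun g _ => this g)]
    simp [Finset.card_univ]
  linarith

lemma fin2_cases (b : Fin 2) : b = 0 ∨ b = 1 := by fin_cases b <;> simp

lemma sum_swap_bound {G XS X : Type*} [Fintype G] [Fintype X] [Fintype XS]
    (T : G → XS → X → ℝ) (c1 c2 K : ℝ) (hc1 : 0 ≤ c1) (hc2 : 0 ≤ c2) (hK : 0 ≤ K)
    (hbd : ∀ xs, K ≤ ∑ g : G, ∑ x : X, T g xs x) :
    c1 * c2 * (Fintype.card XS) * K ≤ ∑ g : G, c1 * ∑ xs : XS, c2 * ∑ x : X, T g xs x := by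
  have heq : ∑ g : G, c1 * ∑ xs : XS, c2 * ∑ x : X, T g xs x
      = c1 * c2 * ∑ xs : XS, ∑ g : G, ∑ x : X, T g xs x := by
    rw [← Finset.mul_sum, Finset.sum_comm]
    rw [show (∑ xs : XS, ∑ g : G, c2 * ∑ x : X, T g xs x)
        = c2 * ∑ xs : XS, ∑ g : G, ∑ x : X, T g xs x by
      rw [Finset.mul_sum]
      exact Finset.sum_congr rfl fun xs _ => (Finset.mul_sum _ _ _).symm]
    ring
  rw [heq]
  have h1 : (Fintype.card XS : ℝ) * K ≤ ∑ xs : XS, ∑ g : G, ∑ x : X, T g xs x := by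
    calc (Fintype.card XS : ℝ) * K = ∑ _xs : XS, K := by
          rw [Finset.sum_const, nsmul_eq_mul, Finset.card_univ]
      _ ≤ _ := Finset.sum_le_sum fun xs _ => hbd xs
  calc c1 * c2 * (Fintype.card XS) * K = c1 * c2 * ((Fintype.card XS : ℝ) * K) := by ring
    _ ≤ c1 * c2 * (∑ xs : XS, ∑ g : G, ∑ x : X, T g xs x) := by
        apply mul_le_mul_of_nonneg_left h1 (by positivity)
    _ = _ := rfl

theorem stmt18 (m : ℕ) (hm : 1 ≤ m)
    (Est : (Fin m → ℕ × Fin 2) → ℕ → Fin 2 → ℝ)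
    (hE0 : ∀ s x y, 0 ≤ Est s x y) (hE1 : ∀ s x, Est s x 0 + Est s x 1 = 1) :
    ∃ f : ℕ → Fin 2,
      (1 / 4 : ℝ) ≤
        (1 / (2 * m : ℝ) ^ m) * ∑ xs : Fin m → Fin (2 * m),
          (1 / (2 * m : ℝ)) * ∑ x : Fin (2 * m),
            (1 / 2 : ℝ) * ∑ y : Fin 2,
              |(if y = f ((x : ℕ) + 1) then (1 : ℝ) else 0)
                - Est (fun i => ((xs i : ℕ) + 1, f ((xs i : ℕ) + 1))) ((x : ℕ) + 1) y| := by
  classical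
  have hfOf' : ∀ (g : Fin (2*m) → Fin 2) (x : Fin (2*m)),
      (fun n : ℕ => if h : n - 1 < 2*m then g ⟨n-1, h⟩ else 0) ((x:ℕ)+1) = g x := by
    intro g x
    simp
  suffices h : ∃ g : Fin (2*m) → Fin 2,
      (1 / 4 : ℝ) ≤
        (1 / (2 * m : ℝ) ^ m) * ∑ xs : Fin m → Fin (2 * m),
          (1 / (2 * m : ℝ)) * ∑ x : Fin (2 * m),
            (1 / 2 : ℝ) * ∑ y : Fin 2,
              |(if y = g x then (1 : ℝ) else 0)
                - Est (fun i => ((xs i : ℕ) + 1, g (xs i))) ((x : ℕ) + 1) y| by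
    obtain ⟨g, hg⟩ := h
    refine ⟨fun n : ℕ => if h : n - 1 < 2*m then g ⟨n-1, h⟩ else 0, ?_⟩
    simp only [hfOf']
    exact hg
  -- key: for fixed xs, the g-sum of the x-sum is large
  have key : ∀ xs : Fin m → Fin (2 * m),
      (m : ℝ) * 2 ^ (2*m) / 2 ≤ ∑ g : Fin (2*m) → Fin 2, ∑ x : Fin (2*m),
        (1 / 2 : ℝ) * ∑ y : Fin 2,
          |(if y = g x then (1 : ℝ) else 0)
            - Est (fun i => ((xs i : ℕ) + 1, g (xs i))) ((x : ℕ) + 1) y| := by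
    intro xs
    rw [Finset.sum_comm]
    -- rewrite inner TV sums
    have hT : ∀ (x : Fin (2*m)) (g : Fin (2*m) → Fin 2),
        (1 / 2 : ℝ) * ∑ y : Fin 2,
          |(if y = g x then (1 : ℝ) else 0)
            - Est (fun i => ((xs i : ℕ) + 1, g (xs i))) ((x : ℕ) + 1) y|
        = Est (fun i => ((xs i : ℕ) + 1, g (xs i))) ((x : ℕ) + 1) (g x + 1) := by
      intro x g
      exact tv_eq _ (hE0 _ _ _) (hE0 _ _ _) (hE1 _ _) (g x)
    have hgood : ∀ x : Fin (2*m), (∀ i, xs i ≠ x) →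
        ∑ g : Fin (2*m) → Fin 2,
          Est (fun i => ((xs i : ℕ) + 1, g (xs i))) ((x : ℕ) + 1) (g x + 1)
        = 2 ^ (2*m) / 2 := by
      intro x hx
      apply flip_sum x
      intro g
      have hsample : (fun i => ((xs i : ℕ) + 1, (Function.update g x (g x + 1)) (xs i)))
          = (fun i => ((xs i : ℕ) + 1, g (xs i))) := by
        funext i
        rw [Function.update_of_ne (hx i)]
      rw [hsample, Function.update_self]
      have hb : g x + 1 + 1 = g x := by
        rcases fin2_cases (g x) with h | h <;> rw [h] <;> decide
      rw [hb]
      rcases fin2_cases (g x) with h | h <;> rw [h] <;>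
        simpa [add_comm] using hE1 (fun i => ((xs i : ℕ) + 1, g (xs i))) ((x:ℕ)+1)
    -- count good x's
    set G : Finset (Fin (2*m)) := Finset.univ.filter (fun x => ∀ i, xs i ≠ x) with hG
    have hGcard : (m : ℝ) ≤ (G.card : ℝ) := by
      have hbad : (Finset.univ.filter (fun x => ¬ ∀ i, xs i ≠ x)).card ≤ m := by
        have hsub : Finset.univ.filter (fun x : Fin (2*m) => ¬ ∀ i, xs i ≠ x)
            ⊆ Finset.univ.image xs := by
          intro x hx
          simp only [Finset.mem_filter, not_forall, not_not] at hx
          obtain ⟨i, hi⟩ := hx.2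
          exact Finset.mem_image.2 ⟨i, Finset.mem_univ i, hi⟩
        calc _ ≤ (Finset.univ.image xs).card := Finset.card_le_card hsub
          _ ≤ (Finset.univ : Finset (Fin m)).card := Finset.card_image_le
          _ = m := by simp
      have htot := Finset.card_filter_add_card_filter_not
        (s := (Finset.univ : Finset (Fin (2*m)))) (p := fun x => ∀ i, xs i ≠ x)
      rw [← hG] at htot
      simp only [Finset.card_univ, Fintype.card_fin] at htot
      have : m ≤ G.card := by omega
      exact_mod_cast this
    calc (m : ℝ) * 2 ^ (2*m) / 2 ≤ (G.card : ℝ) * (2 ^ (2*m) / 2) := by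
          rw [mul_div_assoc]
          gcongr
      _ = ∑ x ∈ G, (2 ^ (2*m) / 2 : ℝ) := by rw [Finset.sum_const, nsmul_eq_mul]
      _ = ∑ x ∈ G, ∑ g : Fin (2*m) → Fin 2,
            Est (fun i => ((xs i : ℕ) + 1, g (xs i))) ((x : ℕ) + 1) (g x + 1) := by
          refine Finset.sum_congr rfl fun x hx => ?_
          rw [hG] at hx
          exact (hgood x (Finset.mem_filter.1 hx).2).symm
      _ ≤ ∑ x : Fin (2*m), ∑ g : Fin (2*m) → Fin 2,
            Est (fun i => ((xs i : ℕ) + 1, g (xs i))) ((x : ℕ) + 1) (g x + 1) := by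
          apply Finset.sum_le_sum_of_subset_of_nonneg (Finset.subset_univ G)
          intro x _ _
          exact Finset.sum_nonneg fun g _ => hE0 _ _ _
      _ = _ := by
          refine Finset.sum_congr rfl fun x _ => Finset.sum_congr rfl fun g _ => ?_
          exact (hT x g).symm
  -- assemble
  by_contra hcon
  push_neg at hcon
  have hm1 : (1:ℝ) ≤ (m:ℝ) := by exact_mod_cast hm
  have h2m : (0:ℝ) < 2 * (m:ℝ) := by linarith
  have hc1 : (0:ℝ) ≤ 1 / (2 * m : ℝ) ^ m := by positivity
  have hc2 : (0:ℝ) ≤ 1 / (2 * m : ℝ) := by positivity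
  have hK : (0:ℝ) ≤ (m : ℝ) * 2 ^ (2*m) / 2 := by positivity
  have lower := sum_swap_bound
    (fun (g : Fin (2*m) → Fin 2) (xs : Fin m → Fin (2*m)) (x : Fin (2*m)) =>
      (1 / 2 : ℝ) * ∑ y : Fin 2,
        |(if y = g x then (1 : ℝ) else 0)
          - Est (fun i => ((xs i : ℕ) + 1, g (xs i))) ((x : ℕ) + 1) y|)
    (1 / (2 * m : ℝ) ^ m) (1 / (2 * m : ℝ)) ((m : ℝ) * 2 ^ (2*m) / 2)
    hc1 hc2 hK key
  beta_reduce at lower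
  have hcardXS : (Fintype.card (Fin m → Fin (2*m)) : ℝ) = (2 * (m:ℝ)) ^ m := by
    rw [Fintype.card_fun]
    simp only [Fintype.card_fin]
    push_cast
    ring
  rw [hcardXS] at lower
  have hconst : (1 / (2 * m : ℝ) ^ m) * (1 / (2 * m : ℝ)) * (2 * (m:ℝ)) ^ m
      * ((m : ℝ) * 2 ^ (2*m) / 2) = (2:ℝ) ^ (2*m) / 4 := by
    have hne : (2 * (m:ℝ)) ≠ 0 := ne_of_gt h2m
    have hne' : (2 * (m:ℝ)) ^ m ≠ 0 := pow_ne_zero _ hne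
    field_simp
    ring
  rw [hconst] at lower
  have upper : (∑ g : Fin (2*m) → Fin 2,
      (1 / (2 * m : ℝ) ^ m) * ∑ xs : Fin m → Fin (2 * m),
        (1 / (2 * m : ℝ)) * ∑ x : Fin (2 * m),
          (1 / 2 : ℝ) * ∑ y : Fin 2,
            |(if y = g x then (1 : ℝ) else 0)
              - Est (fun i => ((xs i : ℕ) + 1, g (xs i))) ((x : ℕ) + 1) y|)
      < (2:ℝ) ^ (2*m) * (1/4) := by
    calc _ < ∑ _g : Fin (2*m) → Fin 2, (1/4 : ℝ) :=
          Finset.sum_lt_sum_of_nonempty Finset.univ_nonempty (fun g _ => hcon g)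
      _ = (2:ℝ) ^ (2*m) * (1/4) := by
          rw [Finset.sum_const, nsmul_eq_mul, Finset.card_univ]
          simp [Fintype.card_fun]
  linarith
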